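/- arXiv:2203.01845 — 3 statements merged into one kernel-verified Lean document; each statement's English description precedes it below -/
import Mathlib

section
/- For any integrable function f : T_ref → ℝ on the reference triangle, the change of variables via the Duffy transform gives ∫_{T_ref} f(x) dx = ∫_0^1 ∫_0^1 f(s, t(1−s)) (1−s) dt ds. -/
open MeasureTheory

theorem duffy_change_of_variables (f : ℝ × ℝ → ℝ)
    (hf : IntegrableOn f {x : ℝ × ℝ | 0 ≤ x.1 ∧ 0 ≤ x.2 ∧ x.1 + x.2 ≤ 1}) :
    ∫ x in {x : ℝ × ℝ | 0 ≤ x.1 ∧ 0 ≤ x.2 ∧ x.1 + x.2 ≤ 1}, f x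
      = ∫ s in Set.Icc (0:ℝ) 1, ∫ t in Set.Icc (0:ℝ) 1, f (s, t * (1 - s)) * (1 - s) := by
  set T : Set (ℝ × ℝ) := {x : ℝ × ℝ | 0 ≤ x.1 ∧ 0 ≤ x.2 ∧ x.1 + x.2 ≤ 1} with hTdef
  have hT : MeasurableSet T := by
    apply MeasurableSet.inter (measurableSet_le measurable_const measurable_fst)
    exact MeasurableSet.inter (measurableSet_le measurable_const measurable_snd)
      (measurableSet_le (measurable_fst.add measurable_snd) measurable_const)
  have hind : Integrable (T.indicator f) := (integrable_indicator_iff hT).2 hf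
  have hind' : Integrable (T.indicator f) ((volume : Measure ℝ).prod volume) := by
    rwa [← Measure.volume_eq_prod]
  rw [← integral_indicator hT, Measure.volume_eq_prod, integral_prod _ hind']
  have key : ∀ s : ℝ, (∫ y, T.indicator f (s, y)) =
      (Set.Icc (0:ℝ) 1).indicator
        (fun s => ∫ t in Set.Icc (0:ℝ) 1, f (s, t * (1 - s)) * (1 - s)) s := by
    intro s
    by_cases hs : s ∈ Set.Icc (0:ℝ) 1
    · rw [Set.indicator_of_mem hs]
      have h1 : ∀ y : ℝ, T.indicator f (s, y)
          = (Set.Icc (0:ℝ) (1 - s)).indicator (fun y => f (s, y)) y := by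
        intro y
        by_cases hy : y ∈ Set.Icc (0:ℝ) (1 - s)
        · rw [Set.indicator_of_mem hy, Set.indicator_of_mem]
          exact ⟨hs.1, hy.1, by linarith [hy.2]⟩
        · rw [Set.indicator_of_notMem hy, Set.indicator_of_notMem]
          intro hmem
          exact hy ⟨hmem.2.1, by linarith [hmem.2.2]⟩
      simp_rw [h1]
      rw [integral_indicator measurableSet_Icc]
      have h01 : (0:ℝ) ≤ 1 - s := by linarith [hs.2]
      rw [integral_Icc_eq_integral_Ioc, ← intervalIntegral.integral_of_le h01]
      rw [integral_Icc_eq_integral_Ioc, ← intervalIntegral.integral_of_le (by norm_num : (0:ℝ) ≤ 1)]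
      rw [intervalIntegral.integral_mul_const]
      have := intervalIntegral.smul_integral_comp_mul_right
        (a := 0) (b := 1) (fun y => f (s, y)) (1 - s)
      simp only [zero_mul, one_mul, smul_eq_mul] at this
      rw [← this, mul_comm]
    · rw [Set.indicator_of_notMem hs]
      have : ∀ y : ℝ, T.indicator f (s, y) = 0 := by
        intro y
        apply Set.indicator_of_notMem
        intro hmem
        rcases hmem with ⟨h1, h2, h3⟩
        simp only [Set.mem_Icc, not_and_or, not_le] at hs
        rcases hs with h | h
        · exact absurd h1 (not_le.2 h)
        · linarith
      simp [this]
  simp_rw [key]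
  rw [integral_indicator measurableSet_Icc]
end

section
/- Let η : T → [0,∞) be refinement indicators on a finite set T, θ ∈ (0,1], and sort T so that η(T_1) ≥ η(T_2) ≥ ... ≥ η(T_n). Let m be the smallest index with θ Σ_{i=1}^n η(T_i)² ≤ Σ_{i=1}^m η(T_i)². Then M = {T_1, ..., T_m} has minimal cardinality among all subsets satisfying the Dörfler criterion. -/
open Finset

lemma doerfler_aux (n k : ℕ) (f : ℕ → ℝ)
    (hs : ∀ i j, i ≤ j → j < n → f j ≤ f i)
    (M' : Finset ℕ) (hM : M' ⊆ range n) (hc : M'.card = k) :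
    ∑ i ∈ M', f i ≤ ∑ i ∈ range k, f i := by
  set e := M'.orderEmbOfFin hc with he
  have hle : ∀ i : Fin k, (i : ℕ) ≤ e i := by
    intro ⟨v, hv⟩
    induction v with
    | zero => exact Nat.zero_le _
    | succ w ih =>
      have hw : w < k := lt_trans (Nat.lt_succ_self w) hv
      have h1 : e ⟨w, hw⟩ < e ⟨w + 1, hv⟩ := e.strictMono (by simp [Fin.lt_def])
      have h2 : w ≤ e ⟨w, hw⟩ := ih hw
      show w + 1 ≤ _
      omega
  have hmem : ∀ i : Fin k, e i ∈ M' := fun i => M'.orderEmbOfFin_mem hc i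
  have hsum : ∑ i ∈ M', f i = ∑ i : Fin k, f (e i) := by
    refine (Finset.sum_bij (fun (i : Fin k) _ => e i) (fun i _ => hmem i)
      (fun i _ j _ h => e.injective h) ?_ (fun i _ => rfl)).symm
    intro b hb
    have : b ∈ Set.range e := by rw [Finset.range_orderEmbOfFin]; exact hb
    obtain ⟨i, hi⟩ := this
    exact ⟨i, Finset.mem_univ i, hi⟩
  rw [hsum, ← Fin.sum_univ_eq_sum_range]
  apply Finset.sum_le_sum
  intro i _
  exact hs i (e i) (hle i) (Finset.mem_range.mp (hM (hmem i)))

theorem doerfler_greedy_is_minimal (n m : ℕ) (η : ℕ → ℝ) (hη : ∀ i, 0 ≤ η i)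
    (hsort : ∀ i j, i ≤ j → j < n → η j ≤ η i)
    (θ : ℝ) (hθ : θ ∈ Set.Ioc (0:ℝ) 1) (hmn : m ≤ n)
    (hm : θ * ∑ i ∈ range n, η i ^ 2 ≤ ∑ i ∈ range m, η i ^ 2)
    (hmin : ∀ k < m, ¬ (θ * ∑ i ∈ range n, η i ^ 2 ≤ ∑ i ∈ range k, η i ^ 2)) :
    ∀ M' ⊆ range n, (θ * ∑ i ∈ range n, η i ^ 2 ≤ ∑ i ∈ M', η i ^ 2) → m ≤ M'.card := by
  intro M' hM' hcrit
  by_contra h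
  push_neg at h
  apply hmin M'.card h
  refine le_trans hcrit ?_
  exact doerfler_aux n M'.card (fun i => η i ^ 2)
    (fun i j hij hjn => by
      have := hsort i j hij hjn
      have := hη j
      show η j ^ 2 ≤ η i ^ 2
      nlinarith)
    M' hM' rfl
end

section
/- The scalar nonlinearity μ(t) = 1 + exp(−t) satisfies: the induced vector field Φ(p) = μ(|p|²) p on ℝ² is Lipschitz continuous, and if additionally 0 < μ(t) + 2tμ'(t) holds for all t ≥ 0 (which is true for this μ, since μ(t) + 2tμ'(t) = 1 + (1 − 2t)e^{−t} > 0 for all t ≥ 0), then Φ is strongly monotone: (Φ(p) − Φ(q)) · (p − q) ≥ c|p − q|² for some c > 0 and all p, q ∈ ℝ². -/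
open scoped RealInnerProductSpace

/-- The vector field `Φ(p) = μ(|p|²) p` with `μ(t) = 1 + exp(-t)`. -/
noncomputable def PhiNL (p : EuclideanSpace ℝ (Fin 2)) : EuclideanSpace ℝ (Fin 2) :=
  (1 + Real.exp (-(‖p‖ ^ 2))) • p

/-- key derivative bound: `(2u-1)e^{-u} ≤ 2 e^{-3/2}` for all `u`. -/
lemma auxNL_exp_bound (u : ℝ) : (2*u - 1) * Real.exp (-u) ≤ 2 * Real.exp (-(3/2)) := by
  have h := Real.add_one_le_exp (u - 3/2)
  have h1 : Real.exp (u - 3/2) * Real.exp (-u) = Real.exp (-(3/2)) := by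
    rw [← Real.exp_add]; ring_nf
  have hp := Real.exp_pos (-u)
  nlinarith [Real.exp_pos (u - 3/2)]

/-- Monotonicity of `t e^{-t²} + K t` with `K = 2 e^{-3/2}`. -/
lemma auxNL_mono : Monotone (fun t : ℝ => t * Real.exp (-(t^2)) + (2 * Real.exp (-(3/2))) * t) := by
  have hd : ∀ t : ℝ, HasDerivAt (fun t : ℝ => t * Real.exp (-(t^2)) + (2 * Real.exp (-(3/2))) * t)
      (1 * Real.exp (-(t^2)) + t * (Real.exp (-(t^2)) * (-(2*t))) + 2 * Real.exp (-(3/2))) t := by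
    intro t
    have h1 : HasDerivAt (fun t : ℝ => -(t^2)) (-(2*t)) t := by
      exact ((hasDerivAt_pow 2 t).neg).congr_deriv (by norm_num)
    have h2 := h1.exp
    have h3 := (hasDerivAt_id t).mul h2
    have h4 : HasDerivAt (fun t : ℝ => (2 * Real.exp (-(3/2))) * t) (2 * Real.exp (-(3/2))) t := by
      simpa using (hasDerivAt_id t).const_mul (2 * Real.exp (-(3/2)))
    exact h3.add h4
  apply monotone_of_deriv_nonneg
  · exact fun t => (hd t).differentiableAt
  · intro t
    rw [(hd t).deriv]
    have := auxNL_exp_bound (t^2)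
    nlinarith [Real.exp_pos (-(t^2))]

/-- `b (e^{-b²} - e^{-a²}) ≤ 3(a-b)` for `0 ≤ b ≤ a`. -/
lemma auxNL_lip (a b : ℝ) (hb : 0 ≤ b) (hab : b ≤ a) :
    b * (Real.exp (-(b^2)) - Real.exp (-(a^2))) ≤ 3 * (a - b) := by
  have hmono : Real.exp (-(a^2)) ≤ Real.exp (-(b^2)) := by
    apply Real.exp_le_exp.2; nlinarith
  have hb1 : Real.exp (-(b^2)) ≤ 1 := Real.exp_le_one_iff.2 (by nlinarith)
  have hbe : b^2 * Real.exp (-(b^2)) ≤ 1 := by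
    have h := Real.add_one_le_exp (b^2)
    have h2 : Real.exp (b^2) * Real.exp (-(b^2)) = 1 := by rw [← Real.exp_add]; simp
    nlinarith [Real.exp_pos (-(b^2))]
  rcases le_or_gt a (2*b) with hc | hc
  · have key : Real.exp (-(b^2)) - Real.exp (-(a^2)) ≤ Real.exp (-(b^2)) * (a^2 - b^2) := by
      have h := Real.add_one_le_exp (-(a^2 - b^2))
      have h2 : Real.exp (-(b^2)) * Real.exp (-(a^2-b^2)) = Real.exp (-(a^2)) := by
        rw [← Real.exp_add]; ring_nf
      nlinarith [Real.exp_pos (-(b^2))]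
    have h3 : b * (Real.exp (-(b^2)) - Real.exp (-(a^2))) ≤ b * (Real.exp (-(b^2)) * (a^2 - b^2)) :=
      mul_le_mul_of_nonneg_left key hb
    have h4 : b * (Real.exp (-(b^2)) * (a^2 - b^2)) = (b*(a+b) * Real.exp (-(b^2))) * (a - b) := by ring
    have h5 : b*(a+b) * Real.exp (-(b^2)) ≤ 3 := by
      have hle : b*(a+b) ≤ 3 * b^2 := by nlinarith
      calc b*(a+b) * Real.exp (-(b^2)) ≤ 3 * b^2 * Real.exp (-(b^2)) :=
            mul_le_mul_of_nonneg_right hle (Real.exp_pos _).le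
        _ ≤ 3 := by nlinarith
    nlinarith [Real.exp_pos (-(b^2))]
  · nlinarith [Real.exp_pos (-(a^2))]

lemma auxNL_pos (t : ℝ) (_ht : 0 ≤ t) : 0 < 1 + (1 - 2*t) * Real.exp (-t) := by
  have h := Real.add_one_le_exp (t/2)
  have h2 : Real.exp (t/2) * Real.exp (t/2) * Real.exp (-t) = 1 := by
    rw [← Real.exp_add, ← Real.exp_add]; simp
  nlinarith [Real.exp_pos (-t), Real.exp_pos (t/2), sq_nonneg (t/2 - 1)]

lemma auxNL_c_pos : (0:ℝ) < 1 - 2 * Real.exp (-(3/2)) := by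
  have h := Real.add_one_le_exp (3/2 : ℝ)
  have h2 : Real.exp (3/2 : ℝ) * Real.exp (-(3/2:ℝ)) = 1 := by rw [← Real.exp_add]; simp
  nlinarith [Real.exp_pos (-(3/2:ℝ))]

/-- one-sided Lipschitz helper -/
lemma auxNL_lip_half (p q : EuclideanSpace ℝ (Fin 2)) (h : ‖q‖ ≤ ‖p‖) :
    ‖PhiNL p - PhiNL q‖ ≤ 5 * ‖p - q‖ := by
  set a := ‖p‖ with ha
  set b := ‖q‖ with hb
  set m := Real.exp (-(a^2)) with hm
  set n := Real.exp (-(b^2)) with hn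
  have hmn : m ≤ n := by
    apply Real.exp_le_exp.2; nlinarith [norm_nonneg q]
  have hsplit : PhiNL p - PhiNL q = (1+m) • (p - q) + (m - n) • q := by
    simp only [PhiNL, ← ha, ← hb, ← hm, ← hn, smul_sub, sub_smul]
    module
  have h1 : ‖PhiNL p - PhiNL q‖ ≤ (1+m) * ‖p - q‖ + (n - m) * b := by
    rw [hsplit]
    calc ‖(1+m) • (p - q) + (m - n) • q‖ ≤ ‖(1+m) • (p - q)‖ + ‖(m - n) • q‖ := norm_add_le _ _
      _ = |1+m| * ‖p - q‖ + |m - n| * b := by rw [norm_smul, norm_smul, Real.norm_eq_abs, Real.norm_eq_abs]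
      _ = (1+m) * ‖p - q‖ + (n - m) * b := by
          rw [abs_of_pos (by positivity), abs_of_nonpos (by linarith), neg_sub]
  have h2 : (n - m) * b ≤ 3 * (a - b) := by
    have := auxNL_lip a b (norm_nonneg q) h
    nlinarith
  have h3 : a - b ≤ ‖p - q‖ := by
    have := norm_sub_norm_le p q
    linarith
  have hm1 : m ≤ 1 := Real.exp_le_one_iff.2 (by nlinarith [norm_nonneg p])
  nlinarith [norm_nonneg (p - q)]

lemma auxNL_mono_core (p q : EuclideanSpace ℝ (Fin 2)) :
    (1 - 2 * Real.exp (-(3/2))) * ‖p - q‖ ^ 2 ≤ ⟪PhiNL p - PhiNL q, p - q⟫ := by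
  set K := 2 * Real.exp (-(3/2)) with hK
  set a := ‖p‖
  set b := ‖q‖
  set m := Real.exp (-(a^2)) with hm
  set n := Real.exp (-(b^2)) with hn
  have hinner : ⟪PhiNL p - PhiNL q, p - q⟫
      = (1+m) * (a^2 - ⟪p, q⟫) + (1+n) * (b^2 - ⟪p, q⟫) := by
    simp only [PhiNL, inner_sub_left, inner_sub_right, real_inner_smul_left,
      real_inner_self_eq_norm_sq]
    rw [real_inner_comm q p]
    ring
  have hnormsq : ‖p - q‖^2 = a^2 - 2*⟪p, q⟫ + b^2 := by
    rw [norm_sub_sq_real]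
  set s := ⟪p, q⟫ with hs
  have hkey : m * a^2 + n * b^2 - (m + n) * (a*b) ≥ -K * (a - b)^2 := by
    rcases le_total b a with hab | hab
    · have h := auxNL_mono hab
      simp only at h
      nlinarith
    · have h := auxNL_mono hab
      simp only at h
      nlinarith
  have hsab : s ≤ a * b := real_inner_le_norm p q
  have hmpos : 0 < m := Real.exp_pos _
  have hnpos : 0 < n := Real.exp_pos _
  have hKpos : 0 < K := by positivity
  rw [hinner, hnormsq]
  nlinarith [mul_nonneg (mul_nonneg (by norm_num : (0:ℝ) ≤ 2) hKpos.le) (sub_nonneg.2 hsab),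
    mul_nonneg (add_pos hmpos hnpos).le (sub_nonneg.2 hsab)]

theorem phiNL_lipschitz_and_strongly_monotone :
    (∃ L > (0:ℝ), ∀ p q : EuclideanSpace ℝ (Fin 2), ‖PhiNL p - PhiNL q‖ ≤ L * ‖p - q‖)
    ∧ (∀ t : ℝ, 0 ≤ t → 0 < 1 + (1 - 2 * t) * Real.exp (-t))
    ∧ (∃ c > (0:ℝ), ∀ p q : EuclideanSpace ℝ (Fin 2),
        c * ‖p - q‖ ^ 2 ≤ ⟪PhiNL p - PhiNL q, p - q⟫) := by
  refine ⟨⟨5, by norm_num, fun p q => ?_⟩, fun t ht => by simpa using auxNL_pos t ht,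
    ⟨1 - 2 * Real.exp (-(3/2)), auxNL_c_pos, fun p q => auxNL_mono_core p q⟩⟩
  rcases le_total ‖q‖ ‖p‖ with h | h
  · exact auxNL_lip_half p q h
  · have := auxNL_lip_half q p h
    rwa [← norm_neg (PhiNL q - PhiNL p), ← norm_neg (q - p), neg_sub, neg_sub] at this
end
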